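/- Let X be a closed linear subspace of a complex Banach space Y and let β ≥ 1. Let X^⊥ = {f ∈ Y* : f(x) = 0 for all x ∈ X} and X^⊥⊥ = {F ∈ Y** : F(f) = 0 for all f ∈ X^⊥}. Then the following are equivalent: (a) there exists a bounded linear projection P : Y** → Y** with ‖P‖ ≤ β and kernel equal to X^⊥⊥; (b) there exists a bounded linear projection Q : Y* → Y* with ‖Q‖ ≤ β and range equal to X^⊥. -/

import Mathlib

namespace NormedSpace

variable (𝕜 : Type*) [NontriviallyNormedField 𝕜] (E : Type*) [SeminormedAddCommGroup E]
  [NormedSpace 𝕜 E]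

/-- The topological dual of a seminormed space `E` (as `NormedSpace.Dual` was in Mathlib). -/
def Dual :=
  E →L[𝕜] 𝕜

noncomputable instance : SeminormedAddCommGroup (Dual 𝕜 E) :=
  ContinuousLinearMap.toSeminormedAddCommGroup

noncomputable instance : NormedSpace 𝕜 (Dual 𝕜 E) :=
  ContinuousLinearMap.toNormedSpace

instance : FunLike (Dual 𝕜 E) E 𝕜 :=
  ContinuousLinearMap.funLike

instance : ContinuousLinearMapClass (Dual 𝕜 E) 𝕜 E 𝕜 :=
  ContinuousLinearMap.continuousSemilinearMapClass

end NormedSpace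

open NormedSpace

/-- Let `X` be a closed subspace of a complex Banach space `Y` and `β ≥ 1`.  Then there
is a bounded projection `P` on `Y**` with `‖P‖ ≤ β` and kernel `X^⊥⊥` if and only if
there is a bounded projection `Q` on `Y*` with `‖Q‖ ≤ β` and range `X^⊥`. -/
theorem stmt17 {Y : Type*} [NormedAddCommGroup Y] [NormedSpace ℂ Y] [CompleteSpace Y]
    (X : Subspace ℂ Y) (hX : IsClosed (X : Set Y)) (β : ℝ) (hβ : 1 ≤ β) :
    (∃ P : Dual ℂ (Dual ℂ Y) →L[ℂ] Dual ℂ (Dual ℂ Y),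
        (∀ F : Dual ℂ (Dual ℂ Y), P (P F) = P F) ∧ ‖P‖ ≤ β ∧
        (∀ F : Dual ℂ (Dual ℂ Y),
          P F = 0 ↔ ∀ f : Dual ℂ Y, (∀ x ∈ X, f x = 0) → F f = 0)) ↔
    (∃ Q : Dual ℂ Y →L[ℂ] Dual ℂ Y,
        (∀ f : Dual ℂ Y, Q (Q f) = Q f) ∧ ‖Q‖ ≤ β ∧
        Set.range Q = {f : Dual ℂ Y | ∀ x ∈ X, f x = 0}) := by
  have hβ0 : (0:ℝ) ≤ β := le_trans zero_le_one hβ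
  constructor
  · rintro ⟨P, hP2, hPn, hPk⟩
    set ι : Y →L[ℂ] Dual ℂ (Dual ℂ Y) := inclusionInDoubleDual ℂ Y with hι
    set Q := (P.comp ι).flip with hQdef
    have hQapp : ∀ (f : Dual ℂ Y) (y : Y), Q f y = P (ι y) f := fun f y => rfl
    -- any f in X^⊥ is fixed by Q
    have hfix : ∀ f : Dual ℂ Y, (∀ x ∈ X, f x = 0) → Q f = f := by
      intro f hf
      ext y
      have h1 : P (ι y - P (ι y)) = 0 := by
        rw [map_sub, hP2, sub_self]
      have h2 := (hPk _).mp h1 f hf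
      change (ι y) f - P (ι y) f = 0 at h2
      have : P (ι y) f = (ι y) f := by linear_combination -h2
      rw [hQapp, this]
      rfl
    -- range of Q is contained in X^⊥
    have hmem : ∀ f : Dual ℂ Y, ∀ x ∈ X, Q f x = 0 := by
      intro f x hx
      have h1 : P (ι x) = 0 := by
        apply (hPk _).mpr
        intro g hg
        exact hg x hx
      rw [hQapp, h1]
      rfl
    refine ⟨Q, ?_, ?_, ?_⟩
    · intro f
      exact hfix (Q f) (hmem f)
    · apply ContinuousLinearMap.opNorm_le_bound _ hβ0
      intro f
      apply ContinuousLinearMap.opNorm_le_bound _ (by positivity)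
      intro y
      rw [hQapp]
      have hb : ‖P (ι y)‖ ≤ β * ‖y‖ := by
        calc ‖P (ι y)‖ ≤ ‖P‖ * ‖ι y‖ := ContinuousLinearMap.le_opNorm _ _
          _ ≤ β * ‖y‖ := mul_le_mul hPn (by exact double_dual_bound ℂ Y y)
              (norm_nonneg _) hβ0
      calc ‖P (ι y) f‖ ≤ ‖P (ι y)‖ * ‖f‖ := ContinuousLinearMap.le_opNorm _ _
        _ ≤ (β * ‖y‖) * ‖f‖ := by gcongr
        _ = β * ‖f‖ * ‖y‖ := by ring
    · ext f
      constructor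
      · rintro ⟨g, rfl⟩
        exact hmem g
      · intro hf
        exact ⟨f, hfix f hf⟩
  · rintro ⟨Q, hQ2, hQn, hQr⟩
    set P : Dual ℂ (Dual ℂ Y) →L[ℂ] Dual ℂ (Dual ℂ Y) :=
      ((ContinuousLinearMap.compL ℂ (Dual ℂ Y) (Dual ℂ Y) ℂ).flip Q) with hPdef
    have hPapp : ∀ (F : Dual ℂ (Dual ℂ Y)) (f : Dual ℂ Y), P F f = F (Q f) := fun F f => rfl
    refine ⟨P, ?_, ?_, ?_⟩
    · intro F
      refine ContinuousLinearMap.ext fun f => ?_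
      change F (Q (Q f)) = F (Q f)
      rw [hQ2]
    · apply ContinuousLinearMap.opNorm_le_bound _ hβ0
      intro F
      apply ContinuousLinearMap.opNorm_le_bound _ (by positivity)
      intro f
      change ‖F (Q f)‖ ≤ β * ‖F‖ * ‖f‖
      calc ‖F (Q f)‖ ≤ ‖F‖ * ‖Q f‖ := ContinuousLinearMap.le_opNorm _ _
        _ ≤ ‖F‖ * (‖Q‖ * ‖f‖) := by gcongr; exact ContinuousLinearMap.le_opNorm _ _
        _ ≤ ‖F‖ * (β * ‖f‖) := by gcongr
        _ = β * ‖F‖ * ‖f‖ := by ring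
    · intro F
      constructor
      · intro hF f hf
        have : f ∈ Set.range Q := by rw [hQr]; exact hf
        obtain ⟨g, rfl⟩ := this
        have := congrArg (fun T => T g) hF
        exact this
      · intro h
        refine ContinuousLinearMap.ext fun f => ?_
        have : Q f ∈ Set.range Q := ⟨f, rfl⟩
        rw [hQr] at this
        exact h (Q f) this
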